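/- If a tree T on X displays the characters Ω_A, χ2, φ3, χ3 and χ4, then T displays the generalized quartet X_{≤2} ∪ {a3} | a4 ‖ b3 | b4. -/

import Mathlib

namespace PP

/-- A vertex is a leaf (degree at most one) if it has at most one neighbour. -/
def IsLeafVert {V : Type} (G : SimpleGraph V) (w : V) : Prop :=
  ∀ w₁ w₂ : V, G.Adj w w₁ → G.Adj w w₂ → w₁ = w₂

/-- A (finite, unrooted) phylogenetic tree on a label set `X ⊆ L`:
its leaves are bijectively labelled by the elements of `X`. -/
structure PhyloTree {L : Type} (X : Set L) where
  V : Type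
  finV : Finite V
  G : SimpleGraph V
  isTree : G.IsTree
  leaf : L → V
  leaf_injOn : Set.InjOn leaf X
  leaf_isLeaf : ∀ x ∈ X, IsLeafVert G (leaf x)
  leaf_surj : ∀ w, IsLeafVert G w → ∃ x ∈ X, leaf x = w

/-- The vertex set of the minimal subtree `T[S]` spanning the leaves labelled by `S ∩ X`. -/
def subtree {L : Type} {X : Set L} (T : PhyloTree X) (S : Set L) : Set T.V :=
  {w | ∃ x ∈ S ∩ X, ∃ y ∈ S ∩ X,
        ∃ p : T.G.Walk (T.leaf x) (T.leaf y), p.IsPath ∧ w ∈ p.support}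

/-- `T` displays the character `χ` (a state assignment, whose nonempty fibres on `X`
are the states) if the minimal subtrees spanning distinct states are vertex-disjoint. -/
def displays {L : Type} {X : Set L} (T : PhyloTree X) (χ : L → ℕ) : Prop :=
  ∀ s t : ℕ, s ≠ t → Disjoint (subtree T {x | χ x = s}) (subtree T {x | χ x = t})

/-- A set of characters is compatible if some tree on `X` displays all of them. -/
def compatible {L : Type} (X : Set L) (C : Set (L → ℕ)) : Prop :=
  ∃ T : PhyloTree X, ∀ χ ∈ C, displays T χ

/-- Labels: `(false, i)` is `aᵢ`, `(true, i)` is `bᵢ`. -/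
abbrev Lbl : Type := Bool × ℕ

def a (i : ℕ) : Lbl := (false, i)
def b (i : ℕ) : Lbl := (true, i)

/-- `X = {a₁,…,aₙ,b₁,…,bₙ}`. -/
def Xset (n : ℕ) : Set Lbl := {p | 1 ≤ p.2 ∧ p.2 ≤ n}

/-- `X_{≤ i} = {aⱼ, bⱼ : 1 ≤ j ≤ i}`. -/
def XLE (i : ℕ) : Set Lbl := {p | 1 ≤ p.2 ∧ p.2 ≤ i}

/-- χ_j = X_{≤j-2} | a_{j-1} | b_{j-1} | a_j a_{j+1} | b_j b_{j+1} | a_{j+2} | b_{j+2} | X_{≥j+3} -/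
def chi (j : ℕ) : Lbl → ℕ := fun p =>
  if p.2 + 2 ≤ j then 0
  else if p.2 + 1 = j then cond p.1 2 1
  else if p.2 ≤ j + 1 then cond p.1 4 3
  else if p.2 = j + 2 then cond p.1 6 5
  else 7

def phiMain (j i : ℕ) : ℕ :=
  if i < j then 0 else if i = j then 3 else if i = j + 1 then 4 else 5

def phiSide (j i : ℕ) : ℕ :=
  if i + 3 ≤ j then 0 else if i + 2 = j then 1 else if i + 1 = j then 2 else 5

/-- For even j: φ_j = X_{≤j-3}∪{b_{j-2},b_{j-1}} | a_{j-2} | a_{j-1} | b_j | b_{j+1} | {a_j,a_{j+1}}∪X_{≥j+2};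
for odd j the roles of a and b are swapped. -/
def phi (j : ℕ) : Lbl → ℕ := fun p =>
  if j % 2 = 0 then cond p.1 (phiMain j p.2) (phiSide j p.2)
  else cond p.1 (phiSide j p.2) (phiMain j p.2)

/-- Ω_A = a₁b₁b₂ | {a₂} ∪ X_{≥3}. -/
def OmA : Lbl → ℕ := fun p =>
  cond p.1 (if p.2 ≤ 2 then 0 else 1) (if p.2 = 1 then 0 else 1)

/-- Ω_B = X_{≤n-2} ∪ {b_{n-1}} | a_{n-1} aₙ bₙ. -/
def OmB (n : ℕ) : Lbl → ℕ := fun p =>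
  cond p.1 (if p.2 = n then 1 else 0) (if p.2 + 1 ≥ n then 1 else 0)

/-- Deleting vertex `w` separates `S₁` from `S₂`: every path between a leaf of `S₁`
and a leaf of `S₂` passes through `w`. -/
def vertexSep {L : Type} {X : Set L} (T : PhyloTree X) (w : T.V) (S₁ S₂ : Set L) : Prop :=
  ∀ x ∈ S₁ ∩ X, ∀ y ∈ S₂ ∩ X,
    ∀ p : T.G.Walk (T.leaf x) (T.leaf y), p.IsPath → w ∈ p.support

/-- Deleting edge `e` separates `S₁` from `S₂`: every path between a leaf of `S₁`
and a leaf of `S₂` uses `e`. -/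
def edgeSep {L : Type} {X : Set L} (T : PhyloTree X) (e : Sym2 T.V) (S₁ S₂ : Set L) : Prop :=
  ∀ x ∈ S₁ ∩ X, ∀ y ∈ S₂ ∩ X,
    ∀ p : T.G.Walk (T.leaf x) (T.leaf y), p.IsPath → e ∈ p.edges

/-- An internal vertex of `T`. -/
def Internal {L : Type} {X : Set L} (T : PhyloTree X) (w : T.V) : Prop :=
  ¬ IsLeafVert T.G w

/-- `T` displays the generalized quartet S₁|S₂ ‖ S₃|S₄: there are internal vertices u, v
such that deleting any edge on the u–v path separates S₁ ∪ S₂ from S₃ ∪ S₄,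
deleting u separates S₁ from S₂, and deleting v separates S₃ from S₄. -/
def displaysQuartet {L : Type} {X : Set L} (T : PhyloTree X) (S₁ S₂ S₃ S₄ : Set L) : Prop :=
  ∃ u v : T.V, Internal T u ∧ Internal T v ∧
    ∃ p : T.G.Walk u v, p.IsPath ∧
      (∀ e ∈ p.edges, edgeSep T e (S₁ ∪ S₂) (S₃ ∪ S₄)) ∧
      vertexSep T u S₁ S₂ ∧ vertexSep T v S₃ S₄

section Toolkit

open SimpleGraph

variable {L : Type} {X : Set L} (T : PhyloTree X)

/-- The unique path between two vertices of the tree. -/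
noncomputable def pth (x y : T.V) : T.G.Walk x y :=
  (T.isTree.existsUnique_path x y).exists.choose

lemma pth_isPath (x y : T.V) : (pth T x y).IsPath :=
  (T.isTree.existsUnique_path x y).exists.choose_spec

lemma pth_eq {x y : T.V} (p : T.G.Walk x y) (hp : p.IsPath) : p = pth T x y := by
  obtain ⟨q, hq, hun⟩ := T.isTree.existsUnique_path x y
  rw [hun p hp, hun _ (pth_isPath T x y)]

/-- The support of the unique path, as a set. -/
def seg (x y : T.V) : Set T.V := {w | w ∈ (pth T x y).support}

lemma mem_seg {x y w : T.V} : w ∈ seg T x y ↔ w ∈ (pth T x y).support := Iff.rfl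

lemma seg_symm (x y : T.V) : seg T x y = seg T y x := by
  ext w
  have h := pth_eq T (pth T x y).reverse ((pth_isPath T x y).reverse)
  simp only [mem_seg, ← h, Walk.support_reverse, List.mem_reverse]

lemma left_mem_seg (x y : T.V) : x ∈ seg T x y := (pth T x y).start_mem_support

lemma right_mem_seg (x y : T.V) : y ∈ seg T x y := (pth T x y).end_mem_support

lemma seg_split {x y w : T.V} (h : w ∈ seg T x y) :
    pth T x y = (pth T x w).append (pth T w y) := by
  classical
  have ht := (pth_isPath T x y).takeUntil (u := w) h
  have hd := (pth_isPath T x y).dropUntil (u := w) h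
  rw [← pth_eq T _ ht, ← pth_eq T _ hd]
  exact ((pth T x y).take_spec h).symm

lemma seg_sub_left {x y w : T.V} (h : w ∈ seg T x y) : seg T x w ⊆ seg T x y := by
  intro z hz
  rw [mem_seg, seg_split T h, Walk.mem_support_append_iff]
  exact Or.inl hz

lemma seg_sub_right {x y w : T.V} (h : w ∈ seg T x y) : seg T w y ⊆ seg T x y := by
  intro z hz
  rw [mem_seg, seg_split T h, Walk.mem_support_append_iff]
  exact Or.inr hz

lemma seg_union {x y w : T.V} (h : w ∈ seg T x y) {z : T.V} (hz : z ∈ seg T x y) :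
    z ∈ seg T x w ∨ z ∈ seg T w y := by
  rw [mem_seg, seg_split T h, Walk.mem_support_append_iff] at hz
  exact hz

lemma seg_cover (z : T.V) {x y w : T.V} (hw : w ∈ seg T x y) :
    w ∈ seg T x z ∨ w ∈ seg T z y := by
  classical
  have hb := ((pth T x z).append (pth T z y)).bypass_isPath
  have he := pth_eq T _ hb
  have hw' : w ∈ (((pth T x z).append (pth T z y)).bypass).support := by
    rw [he]; exact hw
  have := ((pth T x z).append (pth T z y)).support_bypass_subset hw'
  rwa [Walk.mem_support_append_iff] at this

lemma seg_antisym {x w z : T.V} (h1 : w ∈ seg T x z) (h2 : z ∈ seg T x w) : w = z := by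
  by_contra hne
  have hnd := (pth_isPath T x w).support_nodup
  rw [seg_split T h2, Walk.support_append, List.nodup_append] at hnd
  refine hnd.2.2 w h1 w ?_ rfl
  have hmem : w ∈ (pth T z w).support := (pth T z w).end_mem_support
  rw [(pth T z w).support_eq_cons, List.mem_cons] at hmem
  rcases hmem with h | h
  · exact absurd h hne
  · exact h

lemma seg_chain {x y u v : T.V} (hv : v ∈ seg T x y) (hu : u ∈ seg T x v) :
    v ∈ seg T u y := by
  have hu' : u ∈ seg T x y := seg_sub_left T hv hu
  rcases seg_union T hu' hv with h | h
  · have : v = u := seg_antisym T h hu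
    rw [this]; exact left_mem_seg T u y
  · exact h

lemma no_leaf_interior {x y w : T.V} (hw : w ∈ seg T x y) (hx : w ≠ x) (hy : w ≠ y)
    (hl : IsLeafVert T.G w) : False := by
  have hnd := (pth_isPath T x y).support_nodup
  rw [seg_split T hw, Walk.support_append, List.nodup_append] at hnd
  obtain ⟨s, hadj_s, hs⟩ : ∃ s, T.G.Adj w s ∧ s ∈ (pth T x w).support := by
    obtain ⟨s, hadj, p', hp'⟩ := Walk.exists_eq_cons_of_ne hx (pth T x w).reverse
    refine ⟨s, hadj, ?_⟩
    have : s ∈ (pth T x w).reverse.support := by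
      rw [hp', Walk.support_cons]
      exact List.mem_cons_of_mem _ p'.start_mem_support
    rwa [Walk.support_reverse, List.mem_reverse] at this
  obtain ⟨t, hadj_t, ht⟩ : ∃ t, T.G.Adj w t ∧ t ∈ (pth T w y).support.tail := by
    obtain ⟨t, hadj, p', hp'⟩ := Walk.exists_eq_cons_of_ne hy (pth T w y)
    refine ⟨t, hadj, ?_⟩
    rw [hp', Walk.support_cons]
    exact p'.start_mem_support
  have hst : s = t := hl s t hadj_s hadj_t
  exact hnd.2.2 s hs s (hst ▸ ht) rfl

lemma exists_first {P : T.V → Prop} {z y : T.V} (p : T.G.Walk z y) :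
    P y → ∃ (m : T.V) (q : T.G.Walk z m) (r : T.G.Walk m y),
      p = q.append r ∧ P m ∧ ∀ w ∈ q.support, P w → w = m := by
  induction p with
  | nil =>
    intro hy
    refine ⟨_, Walk.nil, Walk.nil, rfl, hy, ?_⟩
    intro w hw _
    simpa using hw
  | cons h p ih =>
    intro hy
    rename_i z' c y' 
    by_cases hz : P z'
    · refine ⟨z', Walk.nil, Walk.cons h p, rfl, hz, ?_⟩
      intro w hw _
      simpa using hw
    · obtain ⟨m, q, r, heq, hm, hmin⟩ := ih hy
      refine ⟨m, Walk.cons h q, r, by rw [Walk.cons_append, heq], hm, ?_⟩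
      intro w hw hPw
      rw [Walk.support_cons, List.mem_cons] at hw
      rcases hw with hw | hw
      · exact absurd (hw ▸ hPw) hz
      · exact hmin w hw hPw

lemma exists_median (x y z : T.V) :
    ∃ m, m ∈ seg T x y ∧ m ∈ seg T x z ∧ m ∈ seg T y z := by
  classical
  obtain ⟨m, q, r, heq, hm, hmin⟩ :=
    exists_first T (P := fun w => w ∈ seg T x y) (pth T z y) (right_mem_seg T x y)
  have hzy_nd := (pth_isPath T z y).support_nodup
  rw [heq, Walk.support_append, List.nodup_append] at hzy_nd
  have hq_nd : q.support.Nodup := hzy_nd.1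
  -- m ∈ seg z y
  have hm_zy : m ∈ seg T z y := by
    rw [mem_seg, heq, Walk.mem_support_append_iff]
    exact Or.inl q.end_mem_support
  -- the walk q.append (pth m x) is a path
  have hmx_nd := (pth_isPath T m x).support_nodup
  have hW : (q.append (pth T m x)).IsPath := by
    rw [Walk.isPath_def, Walk.support_append, List.nodup_append]
    refine ⟨hq_nd, ?_, ?_⟩
    · rw [(pth T m x).support_eq_cons] at hmx_nd
      exact hmx_nd.of_cons
    · intro w hwq w' hwt hww'; subst hww'
      have hwx : w ∈ seg T m x := List.mem_of_mem_tail hwt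
      have hPw : w ∈ seg T x y := by
        rw [seg_symm T m x] at hwx
        exact seg_sub_left T hm hwx
      have hwm : w = m := hmin w hwq hPw
      rw [(pth T m x).support_eq_cons] at hmx_nd
      exact (List.nodup_cons.mp hmx_nd).1 (hwm ▸ hwt)
  have hWe := pth_eq T _ hW
  have hm_zx : m ∈ seg T z x := by
    rw [mem_seg, ← hWe, Walk.mem_support_append_iff]
    exact Or.inl q.end_mem_support
  exact ⟨m, hm, by rwa [seg_symm T x z], by rwa [seg_symm T y z]⟩

end Toolkit

lemma chi3_state3 {zl : Lbl} (h : chi 3 zl = 3) : zl = a 3 ∨ zl = a 4 := by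
  obtain ⟨s, i⟩ := zl
  cases s
  · simp only [chi, Bool.cond_false] at h
    have : i = 3 ∨ i = 4 := by split_ifs at h <;> omega
    rcases this with rfl | rfl
    · exact Or.inl rfl
    · exact Or.inr rfl
  · exfalso
    simp only [chi, Bool.cond_true] at h
    split_ifs at h <;> omega

lemma chi3_state4 {zl : Lbl} (h : chi 3 zl = 4) : zl = b 3 ∨ zl = b 4 := by
  obtain ⟨s, i⟩ := zl
  cases s
  · exfalso
    simp only [chi, Bool.cond_false] at h
    split_ifs at h <;> omega
  · simp only [chi, Bool.cond_true] at h
    have : i = 3 ∨ i = 4 := by split_ifs at h <;> omega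
    rcases this with rfl | rfl
    · exact Or.inl rfl
    · exact Or.inr rfl

lemma decode_head {x : Lbl} (h : x ∈ XLE 2) :
    x = a 1 ∨ x = b 1 ∨ x = a 2 ∨ x = b 2 := by
  obtain ⟨s, i⟩ := x
  obtain ⟨h1, h2⟩ := h
  have hi : i = 1 ∨ i = 2 := by omega
  cases s
  · rcases hi with rfl | rfl
    · exact Or.inl rfl
    · exact Or.inr (Or.inr (Or.inl rfl))
  · rcases hi with rfl | rfl
    · exact Or.inr (Or.inl rfl)
    · exact Or.inr (Or.inr (Or.inr rfl))

theorem incompatible_base_case (n : ℕ) (hn : Even n) (hn6 : 6 ≤ n)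
    (T : PhyloTree (Xset n))
    (hOA : displays T OmA) (h2 : displays T (chi 2)) (hp3 : displays T (phi 3))
    (h3 : displays T (chi 3)) (h4 : displays T (chi 4)) :
    displaysQuartet T (XLE 2 ∪ {a 3}) {a 4} {b 3} {b 4} := by
  classical
  have hXa : ∀ i, 1 ≤ i → i ≤ 6 → a i ∈ Xset n := fun i h1 h6 => ⟨h1, le_trans h6 hn6⟩
  have hXb : ∀ i, 1 ≤ i → i ≤ 6 → b i ∈ Xset n := fun i h1 h6 => ⟨h1, le_trans h6 hn6⟩
  have key : ∀ χ : Lbl → ℕ, displays T χ →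
      ∀ x y z w : Lbl, x ∈ Xset n → y ∈ Xset n → z ∈ Xset n → w ∈ Xset n →
      χ y = χ x → χ w = χ z → χ x ≠ χ z →
      ∀ t : T.V, t ∈ seg T (T.leaf x) (T.leaf y) → t ∈ seg T (T.leaf z) (T.leaf w) → False := by
    intro χ hχ x y z w hx hy hz hw hxy hzw hne t h1t h2t
    exact Set.disjoint_left.mp (hχ (χ x) (χ z) hne)
      ⟨x, ⟨rfl, hx⟩, y, ⟨hxy, hy⟩, pth T _ _, pth_isPath T _ _, h1t⟩
      ⟨z, ⟨rfl, hz⟩, w, ⟨hzw, hw⟩, pth T _ _, pth_isPath T _ _, h2t⟩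
  -- base disjointness facts
  have D23 := key (chi 2) h2 (a 2) (a 3) (b 2) (b 3)
    (hXa 2 (by norm_num) (by norm_num)) (hXa 3 (by norm_num) (by norm_num))
    (hXb 2 (by norm_num) (by norm_num)) (hXb 3 (by norm_num) (by norm_num))
    (by decide) (by decide) (by decide)
  have D34 := key (chi 3) h3 (a 3) (a 4) (b 3) (b 4)
    (hXa 3 (by norm_num) (by norm_num)) (hXa 4 (by norm_num) (by norm_num))
    (hXb 3 (by norm_num) (by norm_num)) (hXb 4 (by norm_num) (by norm_num))
    (by decide) (by decide) (by decide)
  have Dab1_34 := key (chi 3) h3 (a 1) (b 1) (a 3) (a 4)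
    (hXa 1 (by norm_num) (by norm_num)) (hXb 1 (by norm_num) (by norm_num))
    (hXa 3 (by norm_num) (by norm_num)) (hXa 4 (by norm_num) (by norm_num))
    (by decide) (by decide) (by decide)
  have Dab1_b34 := key (chi 3) h3 (a 1) (b 1) (b 3) (b 4)
    (hXa 1 (by norm_num) (by norm_num)) (hXb 1 (by norm_num) (by norm_num))
    (hXb 3 (by norm_num) (by norm_num)) (hXb 4 (by norm_num) (by norm_num))
    (by decide) (by decide) (by decide)
  have Da1b2_34 := key OmA hOA (a 1) (b 2) (a 3) (a 4)
    (hXa 1 (by norm_num) (by norm_num)) (hXb 2 (by norm_num) (by norm_num))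
    (hXa 3 (by norm_num) (by norm_num)) (hXa 4 (by norm_num) (by norm_num))
    (by decide) (by decide) (by decide)
  have Db1b2_34 := key OmA hOA (b 1) (b 2) (a 3) (a 4)
    (hXb 1 (by norm_num) (by norm_num)) (hXb 2 (by norm_num) (by norm_num))
    (hXa 3 (by norm_num) (by norm_num)) (hXa 4 (by norm_num) (by norm_num))
    (by decide) (by decide) (by decide)
  have Da1b2_b34 := key OmA hOA (a 1) (b 2) (b 3) (b 4)
    (hXa 1 (by norm_num) (by norm_num)) (hXb 2 (by norm_num) (by norm_num))
    (hXb 3 (by norm_num) (by norm_num)) (hXb 4 (by norm_num) (by norm_num))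
    (by decide) (by decide) (by decide)
  have Db1b2_b34 := key OmA hOA (b 1) (b 2) (b 3) (b 4)
    (hXb 1 (by norm_num) (by norm_num)) (hXb 2 (by norm_num) (by norm_num))
    (hXb 3 (by norm_num) (by norm_num)) (hXb 4 (by norm_num) (by norm_num))
    (by decide) (by decide) (by decide)
  have Da1b2_3b3 := key OmA hOA (a 1) (b 2) (a 3) (b 3)
    (hXa 1 (by norm_num) (by norm_num)) (hXb 2 (by norm_num) (by norm_num))
    (hXa 3 (by norm_num) (by norm_num)) (hXb 3 (by norm_num) (by norm_num))
    (by decide) (by decide) (by decide)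
  have D12_45 := key (chi 4) h4 (a 1) (a 2) (a 4) (a 5)
    (hXa 1 (by norm_num) (by norm_num)) (hXa 2 (by norm_num) (by norm_num))
    (hXa 4 (by norm_num) (by norm_num)) (hXa 5 (by norm_num) (by norm_num))
    (by decide) (by decide) (by decide)
  have D12_5b3 := key (phi 3) hp3 (a 1) (a 2) (a 5) (b 3)
    (hXa 1 (by norm_num) (by norm_num)) (hXa 2 (by norm_num) (by norm_num))
    (hXa 5 (by norm_num) (by norm_num)) (hXb 3 (by norm_num) (by norm_num))
    (by decide) (by decide) (by decide)
  have D12_b34 := key (phi 3) hp3 (a 1) (a 2) (b 3) (b 4)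
    (hXa 1 (by norm_num) (by norm_num)) (hXa 2 (by norm_num) (by norm_num))
    (hXb 3 (by norm_num) (by norm_num)) (hXb 4 (by norm_num) (by norm_num))
    (by decide) (by decide) (by decide)
  -- helpers
  have msymm : ∀ {p q w : T.V}, w ∈ seg T p q → w ∈ seg T q p :=
    fun {p q w} h => (seg_symm T p q) ▸ h
  have nsymm : ∀ {p q w : T.V}, w ∉ seg T p q → w ∉ seg T q p :=
    fun {p q w} h h' => h ((seg_symm T q p) ▸ h')
  have trans3 : ∀ {p q r w : T.V}, w ∉ seg T p q → w ∉ seg T q r → w ∉ seg T p r :=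
    fun {p q r w} h1 h2 h => (seg_cover T q h).elim h1 h2
  -- the two special vertices
  obtain ⟨u, hu34, hu3b3, hu4b3⟩ :=
    exists_median T (T.leaf (a 3)) (T.leaf (a 4)) (T.leaf (b 3))
  obtain ⟨v, hv3b3, hv3b4, hvb34⟩ :=
    exists_median T (T.leaf (a 3)) (T.leaf (b 3)) (T.leaf (b 4))
  have hu_nb34 : u ∉ seg T (T.leaf (b 3)) (T.leaf (b 4)) := fun h => D34 u hu34 h
  have hv_n34 : v ∉ seg T (T.leaf (a 3)) (T.leaf (a 4)) := fun h => D34 v h hvb34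
  have hv_ub3 : v ∈ seg T u (T.leaf (b 3)) := by
    rcases seg_union T hu3b3 hv3b3 with h | h
    · exact absurd (seg_sub_left T hu34 h) hv_n34
    · exact h
  have hu_3v : u ∈ seg T (T.leaf (a 3)) v := by
    rcases seg_union T hv3b3 hu3b3 with h | h
    · exact h
    · exact absurd (seg_sub_left T hvb34 (msymm h)) hu_nb34
  have hv_ub4 : v ∈ seg T u (T.leaf (b 4)) := seg_chain T hv3b4 hu_3v
  have hu_3b4 : u ∈ seg T (T.leaf (a 3)) (T.leaf (b 4)) := seg_sub_left T hv3b4 hu_3v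
  have hv_4b3 : v ∈ seg T (T.leaf (a 4)) (T.leaf (b 3)) := seg_sub_right T hu4b3 hv_ub3
  have hu_4v : u ∈ seg T (T.leaf (a 4)) v := by
    rcases seg_union T hv_4b3 hu4b3 with h | h
    · exact h
    · exact absurd (seg_sub_left T hvb34 (msymm h)) hu_nb34
  have hv_4b4 : v ∈ seg T (T.leaf (a 4)) (T.leaf (b 4)) := by
    by_contra hcon
    rcases seg_cover T (T.leaf (a 4)) hv3b4 with h | h
    · exact hv_n34 h
    · exact hcon h
  have hu_4b4 : u ∈ seg T (T.leaf (a 4)) (T.leaf (b 4)) := seg_sub_left T hv_4b4 hu_4v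
  -- mutual non-separation of the four "head" leaves at u and at v
  have hu_nab1 : u ∉ seg T (T.leaf (a 1)) (T.leaf (b 1)) := fun h => Dab1_34 u h hu34
  have hu_na1b2 : u ∉ seg T (T.leaf (a 1)) (T.leaf (b 2)) := fun h => Da1b2_34 u h hu34
  have hu_nb1b2 : u ∉ seg T (T.leaf (b 1)) (T.leaf (b 2)) := fun h => Db1b2_34 u h hu34
  have hu_na12 : u ∉ seg T (T.leaf (a 1)) (T.leaf (a 2)) := by
    intro h
    exact (trans3 (fun h' => D12_45 u h h') (fun h' => D12_5b3 u h h')) hu4b3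
  have hv_nab1 : v ∉ seg T (T.leaf (a 1)) (T.leaf (b 1)) := fun h => Dab1_b34 v h hvb34
  have hv_na1b2 : v ∉ seg T (T.leaf (a 1)) (T.leaf (b 2)) := fun h => Da1b2_b34 v h hvb34
  have hv_nb1b2 : v ∉ seg T (T.leaf (b 1)) (T.leaf (b 2)) := fun h => Db1b2_b34 v h hvb34
  have hv_na12 : v ∉ seg T (T.leaf (a 1)) (T.leaf (a 2)) := fun h => D12_b34 v h hvb34
  -- u separates the heads from a4
  have main14 : ¬ (u ∉ seg T (T.leaf (a 2)) (T.leaf (a 4)) ∧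
      u ∉ seg T (T.leaf (b 2)) (T.leaf (a 4))) := by
    rintro ⟨hA, hB⟩
    have h23 : u ∈ seg T (T.leaf (a 2)) (T.leaf (a 3)) := by
      by_contra h
      exact (trans3 (nsymm h) hA) hu34
    have hb23 : u ∈ seg T (T.leaf (b 2)) (T.leaf (b 3)) := by
      by_contra h
      exact (trans3 (nsymm hB) h) hu4b3
    exact D23 u h23 hb23
  have hu_a2a4 : u ∈ seg T (T.leaf (a 2)) (T.leaf (a 4)) := by
    by_contra h
    exact main14 ⟨h, trans3 (nsymm hu_nb1b2) (trans3 (nsymm hu_nab1) (trans3 hu_na12 h))⟩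
  have hu_b2a4 : u ∈ seg T (T.leaf (b 2)) (T.leaf (a 4)) := by
    by_contra h
    exact main14 ⟨trans3 (nsymm hu_na12) (trans3 hu_nab1 (trans3 hu_nb1b2 h)), h⟩
  have hu_a1a4 : u ∈ seg T (T.leaf (a 1)) (T.leaf (a 4)) := by
    by_contra h
    exact main14 ⟨trans3 (nsymm hu_na12) h,
      trans3 (nsymm hu_nb1b2) (trans3 (nsymm hu_nab1) h)⟩
  have hu_b1a4 : u ∈ seg T (T.leaf (b 1)) (T.leaf (a 4)) := by
    by_contra h
    exact main14 ⟨trans3 (nsymm hu_na12) (trans3 hu_nab1 h), trans3 (nsymm hu_nb1b2) h⟩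
  -- u lies on the paths from heads to b3
  have main15 : ¬ (u ∉ seg T (T.leaf (a 2)) (T.leaf (b 3)) ∧
      u ∉ seg T (T.leaf (b 2)) (T.leaf (b 3))) := by
    rintro ⟨hA2, hB2⟩
    have h2a3 : u ∈ seg T (T.leaf (a 2)) (T.leaf (a 3)) := by
      by_contra h
      exact (trans3 (nsymm h) hA2) hu3b3
    have hb2a3 : u ∈ seg T (T.leaf (a 3)) (T.leaf (b 2)) := by
      by_contra h
      exact (trans3 h hB2) hu3b3
    obtain ⟨q, hq_b2u, hq_b2b3, hq_ub3⟩ := exists_median T (T.leaf (b 2)) u (T.leaf (b 3))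
    have hq_4b3 : q ∈ seg T (T.leaf (a 4)) (T.leaf (b 3)) := seg_sub_right T hu4b3 hq_ub3
    have hq_3b3 : q ∈ seg T (T.leaf (a 3)) (T.leaf (b 3)) := seg_sub_right T hu3b3 hq_ub3
    have hq_3b2 : q ∈ seg T (T.leaf (a 3)) (T.leaf (b 2)) :=
      msymm (seg_sub_left T (msymm hb2a3) hq_b2u)
    have hq_n23 : q ∉ seg T (T.leaf (a 2)) (T.leaf (a 3)) := fun h => D23 q h hq_b2b3
    have hq_a2b2 : q ∈ seg T (T.leaf (a 2)) (T.leaf (b 2)) := by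
      rcases seg_cover T (T.leaf (a 2)) hq_3b2 with h | h
      · exact absurd (msymm h) hq_n23
      · exact h
    have hq_na1b2 : q ∉ seg T (T.leaf (a 1)) (T.leaf (b 2)) := fun h => Da1b2_3b3 q h hq_3b3
    have hq_a1a2 : q ∈ seg T (T.leaf (a 1)) (T.leaf (a 2)) := by
      rcases seg_cover T (T.leaf (a 1)) hq_a2b2 with h | h
      · exact msymm h
      · exact absurd h hq_na1b2
    exact (trans3 (fun h => D12_45 q hq_a1a2 h) (fun h => D12_5b3 q hq_a1a2 h)) hq_4b3
  have hu_a2b3 : u ∈ seg T (T.leaf (a 2)) (T.leaf (b 3)) := by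
    by_contra h
    exact main15 ⟨h, trans3 (nsymm hu_nb1b2) (trans3 (nsymm hu_nab1) (trans3 hu_na12 h))⟩
  have hu_b2b3 : u ∈ seg T (T.leaf (b 2)) (T.leaf (b 3)) := by
    by_contra h
    exact main15 ⟨trans3 (nsymm hu_na12) (trans3 hu_nab1 (trans3 hu_nb1b2 h)), h⟩
  have hu_a1b3 : u ∈ seg T (T.leaf (a 1)) (T.leaf (b 3)) := by
    by_contra h
    exact main15 ⟨trans3 (nsymm hu_na12) h,
      trans3 (nsymm hu_nb1b2) (trans3 (nsymm hu_nab1) h)⟩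
  have hu_b1b3 : u ∈ seg T (T.leaf (b 1)) (T.leaf (b 3)) := by
    by_contra h
    exact main15 ⟨trans3 (nsymm hu_na12) (trans3 hu_nab1 h), trans3 (nsymm hu_nb1b2) h⟩
  -- u is between each head and v
  have mk17 : ∀ {w : T.V}, u ∈ seg T w (T.leaf (b 3)) → u ∈ seg T w v := by
    intro w hw
    have hvw : v ∈ seg T w (T.leaf (b 3)) := seg_sub_right T hw hv_ub3
    rcases seg_union T hvw hw with h | h
    · exact h
    · exact absurd (seg_sub_left T hvb34 (msymm h)) hu_nb34
  have hu_a1v := mk17 hu_a1b3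
  have hu_b1v := mk17 hu_b1b3
  have hu_a2v := mk17 hu_a2b3
  have hu_b2v := mk17 hu_b2b3
  -- v lies on the paths from heads to b4
  have main18 : ¬ (v ∉ seg T (T.leaf (a 2)) (T.leaf (b 4)) ∧
      v ∉ seg T (T.leaf (b 2)) (T.leaf (b 4))) := by
    rintro ⟨hA, hB⟩
    have h1 : v ∈ seg T (T.leaf (a 2)) (T.leaf (a 3)) := by
      by_contra h
      exact (trans3 (nsymm h) hA) hv3b4
    have h2' : v ∈ seg T (T.leaf (b 2)) (T.leaf (b 3)) := by
      by_contra h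
      exact (trans3 (nsymm h) hB) hvb34
    exact D23 v h1 h2'
  have hv_a2b4 : v ∈ seg T (T.leaf (a 2)) (T.leaf (b 4)) := by
    by_contra h
    exact main18 ⟨h, trans3 (nsymm hv_nb1b2) (trans3 (nsymm hv_nab1) (trans3 hv_na12 h))⟩
  have hv_b2b4 : v ∈ seg T (T.leaf (b 2)) (T.leaf (b 4)) := by
    by_contra h
    exact main18 ⟨trans3 (nsymm hv_na12) (trans3 hv_nab1 (trans3 hv_nb1b2 h)), h⟩
  have hv_a1b4 : v ∈ seg T (T.leaf (a 1)) (T.leaf (b 4)) := by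
    by_contra h
    exact main18 ⟨trans3 (nsymm hv_na12) h,
      trans3 (nsymm hv_nb1b2) (trans3 (nsymm hv_nab1) h)⟩
  have hv_b1b4 : v ∈ seg T (T.leaf (b 1)) (T.leaf (b 4)) := by
    by_contra h
    exact main18 ⟨trans3 (nsymm hv_na12) (trans3 hv_nab1 h), trans3 (nsymm hv_nb1b2) h⟩
  have hu_a1b4 : u ∈ seg T (T.leaf (a 1)) (T.leaf (b 4)) := seg_sub_left T hv_a1b4 hu_a1v
  have hu_b1b4 : u ∈ seg T (T.leaf (b 1)) (T.leaf (b 4)) := seg_sub_left T hv_b1b4 hu_b1v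
  have hu_a2b4 : u ∈ seg T (T.leaf (a 2)) (T.leaf (b 4)) := seg_sub_left T hv_a2b4 hu_a2v
  have hu_b2b4 : u ∈ seg T (T.leaf (b 2)) (T.leaf (b 4)) := seg_sub_left T hv_b2b4 hu_b2v
  -- internality
  have hne_leaf : ∀ {i j : ℕ} {s t : Bool}, ((s,i) : Lbl) ≠ (t,j) →
      1 ≤ i → i ≤ 6 → 1 ≤ j → j ≤ 6 → T.leaf (s,i) ≠ T.leaf (t,j) := by
    intro i j s t hne h1 h2 h3 h4 he
    exact hne (T.leaf_injOn ⟨h1, le_trans h2 hn6⟩ ⟨h3, le_trans h4 hn6⟩ he)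
  have singleton_sub : ∀ (χ : Lbl → ℕ) (zl : Lbl), zl ∈ Xset n →
      T.leaf zl ∈ subtree T {l | χ l = χ zl} := by
    intro χ zl hz
    exact ⟨zl, ⟨rfl, hz⟩, zl, ⟨rfl, hz⟩, SimpleGraph.Walk.nil,
      SimpleGraph.Walk.IsPath.nil, by simp⟩
  have state_of : ∀ (w : T.V) (x y : Lbl) (zl : Lbl), x ∈ Xset n → y ∈ Xset n →
      zl ∈ Xset n → chi 3 y = chi 3 x →
      w ∈ seg T (T.leaf x) (T.leaf y) → T.leaf zl = w → chi 3 zl = chi 3 x := by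
    intro w x y zl hx hy hz hxy hw hzeq
    by_contra hne
    refine Set.disjoint_left.mp (h3 (chi 3 zl) (chi 3 x) hne)
      (hzeq ▸ singleton_sub (chi 3) zl hz)
      ⟨x, ⟨rfl, hx⟩, y, ⟨hxy, hy⟩, pth T _ _, pth_isPath T _ _, hw⟩
  have hu_int : Internal T u := by
    intro hleaf
    obtain ⟨zl, hzX, hzeq⟩ := T.leaf_surj u hleaf
    have hz3 : chi 3 zl = 3 := state_of u (a 3) (a 4) zl
      (hXa 3 (by norm_num) (by norm_num)) (hXa 4 (by norm_num) (by norm_num)) hzX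
      (by decide) hu34 hzeq
    rcases chi3_state3 hz3 with rfl | rfl
    · exact no_leaf_interior T hu4b3
        (hzeq ▸ hne_leaf (by decide) (by norm_num) (by norm_num) (by norm_num) (by norm_num))
        (hzeq ▸ hne_leaf (by decide) (by norm_num) (by norm_num) (by norm_num) (by norm_num))
        hleaf
    · exact no_leaf_interior T hu3b3
        (hzeq ▸ hne_leaf (by decide) (by norm_num) (by norm_num) (by norm_num) (by norm_num))
        (hzeq ▸ hne_leaf (by decide) (by norm_num) (by norm_num) (by norm_num) (by norm_num))
        hleaf
  have hv_int : Internal T v := by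
    intro hleaf
    obtain ⟨zl, hzX, hzeq⟩ := T.leaf_surj v hleaf
    have hz4 : chi 3 zl = 4 := state_of v (b 3) (b 4) zl
      (hXb 3 (by norm_num) (by norm_num)) (hXb 4 (by norm_num) (by norm_num)) hzX
      (by decide) hvb34 hzeq
    rcases chi3_state4 hz4 with rfl | rfl
    · exact no_leaf_interior T hv3b4
        (hzeq ▸ hne_leaf (by decide) (by norm_num) (by norm_num) (by norm_num) (by norm_num))
        (hzeq ▸ hne_leaf (by decide) (by norm_num) (by norm_num) (by norm_num) (by norm_num))
        hleaf
    · exact no_leaf_interior T hv3b3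
        (hzeq ▸ hne_leaf (by decide) (by norm_num) (by norm_num) (by norm_num) (by norm_num))
        (hzeq ▸ hne_leaf (by decide) (by norm_num) (by norm_num) (by norm_num) (by norm_num))
        hleaf
  -- assemble
  refine ⟨u, v, hu_int, hv_int, pth T u v, pth_isPath T u v, ?_, ?_, ?_⟩
  · -- edge separation
    intro e he x hx y hy p hp
    rw [pth_eq T p hp]
    have mkE : ∀ {x' y' : T.V}, u ∈ seg T x' y' → v ∈ seg T u y' →
        e ∈ (pth T x' y').edges := by
      intro x' y' h1 h2'
      have e1 : e ∈ (pth T u y').edges := by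
        rw [seg_split T h2', SimpleGraph.Walk.edges_append, List.mem_append]
        exact Or.inl he
      rw [seg_split T h1, SimpleGraph.Walk.edges_append, List.mem_append]
      exact Or.inr e1
    have hy' : y = b 3 ∨ y = b 4 := hy.1
    rcases hx.1 with hx1 | hx1
    · rcases hx1 with hx1 | hx1
      · rcases decode_head hx1 with rfl | rfl | rfl | rfl <;>
          rcases hy' with rfl | rfl
        · exact mkE hu_a1b3 hv_ub3
        · exact mkE hu_a1b4 hv_ub4
        · exact mkE hu_b1b3 hv_ub3
        · exact mkE hu_b1b4 hv_ub4
        · exact mkE hu_a2b3 hv_ub3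
        · exact mkE hu_a2b4 hv_ub4
        · exact mkE hu_b2b3 hv_ub3
        · exact mkE hu_b2b4 hv_ub4
      · have hx3 : x = a 3 := hx1
        subst hx3
        rcases hy' with rfl | rfl
        · exact mkE hu3b3 hv_ub3
        · exact mkE hu_3b4 hv_ub4
    · have hx4 : x = a 4 := hx1
      subst hx4
      rcases hy' with rfl | rfl
      · exact mkE hu4b3 hv_ub3
      · exact mkE hu_4b4 hv_ub4
  · -- vertexSep u
    intro x hx y hy p hp
    have hy4 : y = a 4 := hy.1
    subst hy4
    rw [pth_eq T p hp]
    rcases hx.1 with hx1 | hx1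
    · rcases decode_head hx1 with rfl | rfl | rfl | rfl
      · exact hu_a1a4
      · exact hu_b1a4
      · exact hu_a2a4
      · exact hu_b2a4
    · have hx3 : x = a 3 := hx1
      subst hx3
      exact hu34
  · -- vertexSep v
    intro x hx y hy p hp
    have hx3 : x = b 3 := hx.1
    have hy4 : y = b 4 := hy.1
    subst hx3; subst hy4
    rw [pth_eq T p hp]
    exact hvb34

end PP
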